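/- Let I be a fractional ideal of K and let α be a nonzero element of N_{K/F}(I). Regard I as a lattice Λ in ∏_{v ∈ Σ_{F,∞}} K_v ≅ ∏_{v ∈ Σ_{F,∞}} ℂ ≅ ℝ^{2d} via the completions at the places of K above the infinite places of F, equipped with the norm ‖x‖ = sup_{v ∈ Σ_{F,∞}} |x_v| / √(|α|_v). Fix an infinite place v₀ of F and let π : I → ℝ² be the composite I → K → K_{v₀} ≅ ℂ ≅ ℝ² divided by √(|α|_{v₀}). Then: (i) every nonzero vector of Λ has norm at least (#(N_{K/F}(I)/(αO_F)))^{−1/(2d)}, and (ii) every β ∈ I with β·c(β) = α satisfies ‖β‖ = 1 and |π(β)| = 1, where |·| is the Euclidean norm on ℝ². -/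

import Mathlib

set_option synthInstance.maxHeartbeats 1000000
set_option maxHeartbeats 1000000

open NumberField

variable (F K : Type) [Field F] [NumberField F] [Field K] [NumberField K] [Algebra F K]

/-- The fractional ideal `N_{K/F}(I)` of `F`, realized as the `𝓞 F`-submodule of `F`
generated by the elements `β * c β` for `β ∈ I`. -/
noncomputable def normSpan (c : K ≃ₐ[F] K) (I : FractionalIdeal (nonZeroDivisors (𝓞 K)) K) :
    Submodule (𝓞 F) F :=
  Submodule.span (𝓞 F) {x : F | ∃ β ∈ (I : Submodule (𝓞 K) K), algebraMap F K x = β * c β}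

/-- The cardinality of the quotient `N_{K/F}(I)/(α 𝓞_F)`. -/
noncomputable def normQuotCard (c : K ≃ₐ[F] K) (I : FractionalIdeal (nonZeroDivisors (𝓞 K)) K)
    (α : F) : ℕ :=
  Nat.card ((normSpan F K c I) ⧸
    (Submodule.comap (normSpan F K c I).subtype (Submodule.span (𝓞 F) {α})))

section AuxGeneral

variable {R M : Type*} [CommRing R] [AddCommGroup M] [Module R M]

theorem auxQuotCardEqRelindex (A B : Submodule R M) :
    Nat.card (B ⧸ A.comap B.subtype) = A.toAddSubgroup.relIndex B.toAddSubgroup := rfl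

theorem auxRelindexMap (e : M ≃ₗ[R] M) (A B : Submodule R M) :
    ((A.map (e : M →ₗ[R] M)).toAddSubgroup).relIndex ((B.map (e : M →ₗ[R] M)).toAddSubgroup)
      = A.toAddSubgroup.relIndex B.toAddSubgroup := by
  have h := AddSubgroup.relIndex_comap (e : M →+ M) (H := (A.map (e : M →ₗ[R] M)).toAddSubgroup)
    (K := B.toAddSubgroup)
  have h1 : ((A.map (e : M →ₗ[R] M)).toAddSubgroup).comap (e : M →+ M) = A.toAddSubgroup := by
    ext x; simp [Submodule.mem_map]
  have h2 : (B.toAddSubgroup).map (e : M →+ M) = (B.map (e : M →ₗ[R] M)).toAddSubgroup := by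
    ext x; simp [Submodule.mem_map]
    constructor
    · rintro ⟨y, hy, rfl⟩
      simpa using hy
    · intro hx
      exact ⟨_, hx, by simp⟩
  rw [h1, h2] at h
  exact h.symm

end AuxGeneral

/-- Multiplication by a nonzero element of `F` as an `𝓞 F`-linear equivalence. -/
noncomputable def auxMulEquiv (u : F) (hu : u ≠ 0) : F ≃ₗ[𝓞 F] F where
  toFun x := u * x
  invFun x := u⁻¹ * x
  map_add' x y := mul_add u x y
  map_smul' r x := by simp [Algebra.smul_def]; ring
  left_inv x := by field_simp
  right_inv x := by field_simp

theorem auxMulEquiv_apply (u : F) (hu : u ≠ 0) (x : F) : auxMulEquiv F u hu x = u * x := rfl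

theorem auxMulEquiv_map_span_singleton (u : F) (hu : u ≠ 0) (a : F) :
    (Submodule.span (𝓞 F) {a}).map (auxMulEquiv F u hu : F →ₗ[𝓞 F] F) = Submodule.span (𝓞 F) {u * a} := by
  rw [Submodule.map_span]
  congr 1
  simp [auxMulEquiv_apply]

theorem auxMulEquiv_map_span_pair (u : F) (hu : u ≠ 0) (a b : F) :
    (Submodule.span (𝓞 F) {a, b}).map (auxMulEquiv F u hu : F →ₗ[𝓞 F] F)
      = Submodule.span (𝓞 F) {u * a, u * b} := by
  rw [Submodule.map_span]
  congr 1
  simp only [Set.image_insert_eq, Set.image_singleton]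
  rfl

/-- The ring of integers as the `𝓞 F`-submodule of `F` spanned by `1`. -/
noncomputable def auxOneEquiv : (𝓞 F) ≃ₗ[𝓞 F] (Submodule.span (𝓞 F) {(1:F)}) := by
  refine LinearEquiv.trans (LinearEquiv.ofInjective (Algebra.linearMap (𝓞 F) F) ?_)
    (LinearEquiv.ofEq _ _ ?_)
  · exact fun a b h => RingOfIntegers.coe_injective h
  · ext x
    simp only [LinearMap.mem_range, Algebra.linearMap_apply, Submodule.mem_span_singleton,
      Algebra.smul_def, mul_one]

theorem auxOneEquiv_coe (x : 𝓞 F) :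
    ((auxOneEquiv F x : Submodule.span (𝓞 F) {(1:F)}) : F) = algebraMap (𝓞 F) F x := rfl

theorem auxAnchor (r : 𝓞 F) :
    (Submodule.span (𝓞 F) {((r:F))}).toAddSubgroup.relIndex
      (Submodule.span (𝓞 F) {(1:F)}).toAddSubgroup
      = Ideal.absNorm (Ideal.span {r}) := by
  rw [← auxQuotCardEqRelindex, Ideal.absNorm_apply, Submodule.cardQuot_apply]
  refine Nat.card_congr (Submodule.Quotient.equiv (Ideal.span {r})
    (Submodule.comap (Submodule.span (𝓞 F) {(1:F)}).subtype
        (Submodule.span (𝓞 F) {((r:F))})) (auxOneEquiv F) ?_).toEquiv.symm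
  ext ⟨x, hx⟩
  simp only [Submodule.mem_map, Submodule.mem_comap, Submodule.subtype_apply,
    Submodule.mem_span_singleton, Ideal.mem_span_singleton]
  constructor
  · rintro ⟨y, ⟨t, rfl⟩, h⟩
    have hx' : x = algebraMap (𝓞 F) F (r * t) := by
      have := congrArg Subtype.val h
      change algebraMap (𝓞 F) F (t • r) = x at this
      rw [← this, smul_eq_mul, mul_comm]
    exact ⟨t, by rw [hx', map_mul, Algebra.smul_def, mul_comm]⟩
  · rintro ⟨t, ht⟩
    rw [Algebra.smul_def] at ht
    refine ⟨r * t, ⟨t, by rw [smul_eq_mul, mul_comm]⟩, ?_⟩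
    apply Subtype.ext
    change algebraMap (𝓞 F) F (r * t) = x
    rw [map_mul, mul_comm]
    exact ht

/-- The key arithmetic inequality: if `α, x` are nonzero elements of an `𝓞 F`-submodule `M`
of `F` and the quotient `M ⧸ α𝓞F` has finite nonzero cardinality `N`, then
`|Nm α| ≤ N * |Nm x|`. -/
theorem auxKeyIneq (M : Submodule (𝓞 F) F) (α x : F) (hαM : α ∈ M) (hxM : x ∈ M)
    (hα0 : α ≠ 0) (hx0 : x ≠ 0)
    (hN : Nat.card (M ⧸ (Submodule.span (𝓞 F) {α}).comap M.subtype) ≠ 0) :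
    |(Algebra.norm ℚ α : ℝ)| ≤
      (Nat.card (M ⧸ (Submodule.span (𝓞 F) {α}).comap M.subtype) : ℝ)
        * |(Algebra.norm ℚ x : ℝ)| := by
  classical
  set N := Nat.card (M ⧸ (Submodule.span (𝓞 F) {α}).comap M.subtype) with hNdef
  -- denominators
  obtain ⟨s₁, hs₁⟩ := IsLocalization.exists_integer_multiple (nonZeroDivisors (𝓞 F)) x
  obtain ⟨s₂, hs₂⟩ := IsLocalization.exists_integer_multiple (nonZeroDivisors (𝓞 F)) α
  obtain ⟨y₁, hy₁⟩ := hs₁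
  obtain ⟨y₂, hy₂⟩ := hs₂
  set u : 𝓞 F := (s₁ : 𝓞 F) * (s₂ : 𝓞 F) with hu
  have hu0 : u ≠ 0 := mul_ne_zero (nonZeroDivisors.ne_zero s₁.2) (nonZeroDivisors.ne_zero s₂.2)
  set uF : F := algebraMap (𝓞 F) F u with huF
  have huF0 : uF ≠ 0 := by
    intro h
    apply hu0
    apply RingOfIntegers.coe_injective
    rw [huF] at h
    simpa using h
  set y : 𝓞 F := (s₂ : 𝓞 F) * y₁ with hy
  have hyF : (y : F) = uF * x := by
    have h1 : (y : F) = algebraMap (𝓞 F) F ((s₂ : 𝓞 F) * y₁) := by rw [hy]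
    rw [Algebra.smul_def] at hy₁
    rw [h1, map_mul, hy₁, huF, hu, map_mul]
    ring
  set a : 𝓞 F := (s₁ : 𝓞 F) * y₂ with ha
  have haF : (a : F) = uF * α := by
    have h1 : (a : F) = algebraMap (𝓞 F) F ((s₁ : 𝓞 F) * y₂) := by rw [ha]
    rw [Algebra.smul_def] at hy₂
    rw [h1, map_mul, hy₂, huF, hu, map_mul]
    ring
  have hy0 : y ≠ 0 := by
    intro h
    apply mul_ne_zero huF0 hx0
    rw [← hyF, h]
    simp
  have ha0 : a ≠ 0 := by
    intro h
    apply mul_ne_zero huF0 hα0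
    rw [← haF, h]
    simp
  -- submodule chain in F
  set A : Submodule (𝓞 F) F := Submodule.span (𝓞 F) {α} with hA
  set P : Submodule (𝓞 F) F := Submodule.span (𝓞 F) {x, α} with hP
  have hAP : A ≤ P := Submodule.span_mono (Set.singleton_subset_iff.mpr (by simp))
  have hPM : P ≤ M := Submodule.span_le.mpr (by
    rintro z (rfl | rfl)
    · exact hxM
    · exact hαM)
  have hA'P' : A.toAddSubgroup ≤ P.toAddSubgroup := fun z hz => hAP hz
  have hP'M' : P.toAddSubgroup ≤ M.toAddSubgroup := fun z hz => hPM hz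
  have hsplit : (A.toAddSubgroup.relIndex P.toAddSubgroup)
      * (P.toAddSubgroup.relIndex M.toAddSubgroup) = A.toAddSubgroup.relIndex M.toAddSubgroup :=
    AddSubgroup.relIndex_mul_relIndex _ _ _ hA'P' hP'M'
  have hNrel : N = A.toAddSubgroup.relIndex M.toAddSubgroup := auxQuotCardEqRelindex A M
  have hn2N : A.toAddSubgroup.relIndex P.toAddSubgroup ≤ N := by
    have hNne : A.toAddSubgroup.relIndex M.toAddSubgroup ≠ 0 := by
      rw [← hNrel]; exact hN
    have hright : P.toAddSubgroup.relIndex M.toAddSubgroup ≠ 0 := fun h0 =>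
      hNne (by rw [← hsplit, h0, mul_zero])
    calc A.toAddSubgroup.relIndex P.toAddSubgroup
        ≤ A.toAddSubgroup.relIndex P.toAddSubgroup
            * P.toAddSubgroup.relIndex M.toAddSubgroup :=
          Nat.le_mul_of_pos_right _ (Nat.pos_of_ne_zero hright)
      _ = A.toAddSubgroup.relIndex M.toAddSubgroup := hsplit
      _ = N := hNrel.symm
  -- scaled chain inside span {1}
  set e := auxMulEquiv F uF huF0 with he
  have hmapA : A.map (e : F →ₗ[𝓞 F] F) = Submodule.span (𝓞 F) {(a : F)} := by
    rw [hA, auxMulEquiv_map_span_singleton, haF]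
  have hmapP : P.map (e : F →ₗ[𝓞 F] F) = Submodule.span (𝓞 F) {(y : F), (a : F)} := by
    rw [hP, auxMulEquiv_map_span_pair, hyF, haF]
  have hrel2 : (Submodule.span (𝓞 F) {(a : F)}).toAddSubgroup.relIndex
      (Submodule.span (𝓞 F) {(y : F), (a : F)}).toAddSubgroup
      = A.toAddSubgroup.relIndex P.toAddSubgroup := by
    rw [← hmapA, ← hmapP]
    exact auxRelindexMap e A P
  -- chains in span {1}
  set O₁ : Submodule (𝓞 F) F := Submodule.span (𝓞 F) {(1:F)} with hO₁
  have hmemO : ∀ r : 𝓞 F, (r : F) ∈ O₁ := fun r =>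
    Submodule.mem_span_singleton.mpr ⟨r, by rw [Algebra.smul_def, mul_one]⟩
  set P₂ : Submodule (𝓞 F) F := Submodule.span (𝓞 F) {(y : F), (a : F)} with hP₂
  have hP₂O : P₂ ≤ O₁ := Submodule.span_le.mpr (by
    rintro z (rfl | rfl)
    · exact hmemO y
    · exact hmemO a)
  have hAP₂ : Submodule.span (𝓞 F) {(a : F)} ≤ P₂ :=
    Submodule.span_mono (Set.singleton_subset_iff.mpr (by simp))
  have hYP₂ : Submodule.span (𝓞 F) {(y : F)} ≤ P₂ :=
    Submodule.span_mono (Set.singleton_subset_iff.mpr (by simp))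
  set m := P₂.toAddSubgroup.relIndex O₁.toAddSubgroup with hm
  have hchainA : (Submodule.span (𝓞 F) {(a : F)}).toAddSubgroup.relIndex P₂.toAddSubgroup * m
      = Ideal.absNorm (Ideal.span {a}) := by
    rw [hm, ← auxAnchor F a]
    exact AddSubgroup.relIndex_mul_relIndex _ _ _ (fun z hz => hAP₂ hz) (fun z hz => hP₂O hz)
  have hchainY : (Submodule.span (𝓞 F) {(y : F)}).toAddSubgroup.relIndex P₂.toAddSubgroup * m
      = Ideal.absNorm (Ideal.span {y}) := by
    rw [hm, ← auxAnchor F y]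
    exact AddSubgroup.relIndex_mul_relIndex _ _ _ (fun z hz => hYP₂ hz) (fun z hz => hP₂O hz)
  have hnY0 : Ideal.absNorm (Ideal.span {y}) ≠ 0 := by
    rw [Ne, Ideal.absNorm_eq_zero_iff, Ideal.span_singleton_eq_bot]
    exact hy0
  have hmnY : m ≤ Ideal.absNorm (Ideal.span {y}) :=
    Nat.le_of_dvd (Nat.pos_of_ne_zero hnY0) (Dvd.intro_left _ hchainY)
  -- the integer inequality
  have hineqN : Ideal.absNorm (Ideal.span {a}) ≤ N * Ideal.absNorm (Ideal.span {y}) := by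
    rw [← hchainA]
    exact Nat.mul_le_mul (by rw [hrel2]; exact hn2N) hmnY
  -- cast to the reals
  have hcast : ∀ r : 𝓞 F, (Ideal.absNorm (Ideal.span {r}) : ℝ) = |(Algebra.norm ℚ (r:F) : ℝ)| := by
    intro r
    rw [Ideal.absNorm_span_singleton, Nat.cast_natAbs]
    congr 1
    rw [← Algebra.coe_norm_int]
    push_cast
    rfl
  have hNmu : (0:ℝ) < |(Algebra.norm ℚ uF : ℝ)| := by
    rw [abs_pos]
    exact_mod_cast (Algebra.norm_ne_zero_iff.mpr huF0)
  have hR : |(Algebra.norm ℚ (a : F) : ℝ)| ≤ (N:ℝ) * |(Algebra.norm ℚ (y : F) : ℝ)| := by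
    rw [← hcast, ← hcast]
    exact_mod_cast hineqN
  rw [haF, hyF] at hR
  have hmulα : |(Algebra.norm ℚ (uF * α) : ℝ)|
      = |(Algebra.norm ℚ uF : ℝ)| * |(Algebra.norm ℚ α : ℝ)| := by
    rw [map_mul]
    push_cast
    exact abs_mul _ _
  have hmulx : |(Algebra.norm ℚ (uF * x) : ℝ)|
      = |(Algebra.norm ℚ uF : ℝ)| * |(Algebra.norm ℚ x : ℝ)| := by
    rw [map_mul]
    push_cast
    exact abs_mul _ _
  rw [hmulα, hmulx] at hR
  rw [mul_left_comm] at hR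
  exact le_of_mul_le_mul_left hR hNmu

theorem lattice_from_ideal
    (d : ℕ) (hd : Module.finrank ℚ F = d)
    (htotallyReal : ∀ v : InfinitePlace F, v.IsReal)
    (htotallyImaginary : ∀ w : InfinitePlace K, w.IsComplex)
    (hquadratic : Module.finrank F K = 2)
    (c : K ≃ₐ[F] K) (hc : c ≠ AlgEquiv.refl)
    (I : FractionalIdeal (nonZeroDivisors (𝓞 K)) K)
    (α : F) (hα : α ∈ normSpan F K c I) (hα0 : α ≠ 0)
    (w : InfinitePlace F → InfinitePlace K)
    (hw : ∀ v, (w v).comap (algebraMap F K) = v) :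
    (∀ β : K, β ∈ I → β ≠ 0 →
      (normQuotCard F K c I α : ℝ) ^ (-(1 / (2 * (d : ℝ)))) ≤
        ⨆ v : InfinitePlace F, ((w v) β) / Real.sqrt (v α)) ∧
    (∀ β : K, β ∈ I → β * c β = algebraMap F K α →
      (⨆ v : InfinitePlace F, ((w v) β) / Real.sqrt (v α)) = 1 ∧
      ∀ v₀ : InfinitePlace F, ((w v₀) β) / Real.sqrt (v₀ α) = 1) := by
  classical
  haveI : FiniteDimensional F K := Module.Finite.right ℚ F K
  -- the automorphism group of `K/F` has exactly two elements, `1` and `c`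
  have hcard : Fintype.card (K ≃ₐ[F] K) = 2 := by
    refine le_antisymm ?_ ?_
    · calc Fintype.card (K ≃ₐ[F] K) ≤ Fintype.card (K →ₐ[F] K) :=
            Fintype.card_le_of_injective _ AlgEquiv.coe_algHom_injective
        _ ≤ Module.finrank K (K →ₗ[F] K) := finrank_algHom F K
        _ = Module.finrank F K := Module.finrank_linearMap_self F K K
        _ = 2 := hquadratic
    · exact Fintype.one_lt_card_iff_nontrivial.mpr ⟨⟨c, AlgEquiv.refl, hc⟩⟩
  haveI hgal : IsGalois F K :=
    IsGalois.of_card_aut_eq_finrank F K (by rw [Nat.card_eq_fintype_card, hcard, hquadratic])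
  have hdich : ∀ σ : K ≃ₐ[F] K, σ = AlgEquiv.refl ∨ σ = c := by
    intro σ
    have huniv : ({(AlgEquiv.refl : K ≃ₐ[F] K), c} : Finset (K ≃ₐ[F] K)) = Finset.univ := by
      apply Finset.eq_univ_of_card
      rw [Finset.card_insert_of_notMem (by simpa using hc.symm), Finset.card_singleton, hcard]
    have : σ ∈ ({(AlgEquiv.refl : K ≃ₐ[F] K), c} : Finset (K ≃ₐ[F] K)) := huniv ▸ Finset.mem_univ σ
    simpa using this
  have hccmul : c * c = 1 := by
    rcases hdich (c * c) with h | h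
    · exact h
    · exact absurd (mul_right_cancel (h.trans (one_mul c).symm)) hc
  have hcc : ∀ x : K, c (c x) = x := by
    intro x
    have := congrArg (fun σ : K ≃ₐ[F] K => σ x) hccmul
    simpa using this
  -- uniqueness of the place above each `v` : `w v ∘ c = w v`
  have hwc : ∀ v : InfinitePlace F, ∀ γ : K, w v (c γ) = w v γ := by
    intro v γ
    have hnr : ¬ (w v).IsUnramified F := by
      rw [NumberField.InfinitePlace.not_isUnramified_iff]
      exact ⟨htotallyImaginary (w v), (hw v).symm ▸ htotallyReal v⟩
    have hstab : MulAction.stabilizer (K ≃ₐ[F] K) (w v) = ⊤ := by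
      apply Subgroup.eq_top_of_card_eq
      rw [NumberField.InfinitePlace.not_isUnramified_iff_card_stabilizer_eq_two.mp hnr,
        Nat.card_eq_fintype_card, hcard]
    have hc_mem : c ∈ MulAction.stabilizer (K ≃ₐ[F] K) (w v) := hstab ▸ Subgroup.mem_top c
    have hsmul : c • (w v) = w v := hc_mem
    have hcsymm : c.symm = c := inv_eq_of_mul_eq_one_left hccmul
    rw [NumberField.InfinitePlace.smul_eq_comap, hcsymm] at hsmul
    conv_rhs => rw [← hsmul]
    rfl
  -- descent of `c`-fixed elements to `F`
  have hdesc : ∀ x : K, c x = x → ∃ y : F, algebraMap F K y = x := by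
    intro x hx
    have hfix : x ∈ IntermediateField.fixedField (⊤ : Subgroup (K ≃ₐ[F] K)) := by
      rintro ⟨σ, -⟩
      rcases hdich σ with h | h <;> subst h
      · rfl
      · exact hx
    have hfixbot : IntermediateField.fixedField (⊤ : Subgroup (K ≃ₐ[F] K)) = ⊥ :=
      ((IsGalois.tfae).out 0 1).mp hgal
    rw [hfixbot] at hfix
    exact IntermediateField.mem_bot.mp hfix
  have hwalg : ∀ (v : InfinitePlace F) (y : F), w v (algebraMap F K y) = v y := by
    intro v y
    conv_rhs => rw [← hw v]
    rfl
  have hvαpos : ∀ v : InfinitePlace F, 0 < v α :=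
    fun v => NumberField.InfinitePlace.pos_iff.mpr hα0
  have hsqrtpos : ∀ v : InfinitePlace F, 0 < Real.sqrt (v α) :=
    fun v => Real.sqrt_pos.mpr (hvαpos v)
  haveI : Nonempty (InfinitePlace F) := inferInstance
  constructor
  · -- part (i)
    intro β hβ hβ0
    set f : InfinitePlace F → ℝ := fun v => w v β / Real.sqrt (v α) with hf
    have hfnonneg : ∀ v, 0 ≤ f v := fun v =>
      div_nonneg (AbsoluteValue.nonneg _ _) (Real.sqrt_nonneg _)
    have hbdd : BddAbove (Set.range f) := Set.Finite.bddAbove (Set.finite_range f)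
    obtain ⟨v1⟩ := (inferInstance : Nonempty (InfinitePlace F))
    have hsup_nonneg : 0 ≤ ⨆ v, f v := le_trans (hfnonneg v1) (le_ciSup hbdd v1)
    -- the element x = β * c β descends to a nonzero element of normSpan
    obtain ⟨x, hxalg⟩ : ∃ y : F, algebraMap F K y = β * c β := by
      apply hdesc
      rw [map_mul, hcc β, mul_comm]
    have hxM : x ∈ normSpan F K c I := Submodule.subset_span ⟨β, hβ, hxalg⟩
    have hx0 : x ≠ 0 := by
      intro h
      apply hβ0
      rw [h, map_zero] at hxalg
      rcases mul_eq_zero.mp hxalg.symm with h' | h'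
      · exact h'
      · exact (AlgEquiv.injective c) (by simpa using h')
    have hvx : ∀ v : InfinitePlace F, v x = (w v β) ^ 2 := by
      intro v
      rw [← hwalg v x, hxalg, map_mul, hwc v β, sq]
    have hd0 : (0:ℝ) < (d:ℝ) := by
      have : 0 < Module.finrank ℚ F := Module.finrank_pos
      rw [hd] at this
      exact_mod_cast this
    set N : ℕ := normQuotCard F K c I α with hNdef
    by_cases hN : N = 0
    · rw [hN]
      push_cast
      rw [Real.zero_rpow (neg_ne_zero.mpr (ne_of_gt (one_div_pos.mpr (by linarith))))]
      exact hsup_nonneg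
    -- main case : N ≠ 0
    have hkey : |(Algebra.norm ℚ α : ℝ)| ≤ (N:ℝ) * |(Algebra.norm ℚ x : ℝ)| :=
      auxKeyIneq F (normSpan F K c I) α x hα hxM hα0 hx0 hN
    -- product of places
    have hmult : ∀ v : InfinitePlace F, v.mult = 1 := by
      intro v
      rw [NumberField.InfinitePlace.mult, if_pos (htotallyReal v)]
    have hprod : ∀ y : F, ∏ v : InfinitePlace F, v y = |(Algebra.norm ℚ y : ℝ)| := by
      intro y
      have := NumberField.InfinitePlace.prod_eq_abs_norm y
      simp only [hmult, pow_one] at this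
      rw [this]
      push_cast
      rfl
    have hcardF : Fintype.card (InfinitePlace F) = d := by
      have h1 := NumberField.InfinitePlace.card_add_two_mul_card_eq_rank F
      have h2 : NumberField.InfinitePlace.nrComplexPlaces F = 0 := by
        rw [Fintype.card_eq_zero_iff]
        exact ⟨fun ⟨v, hv⟩ =>
          (NumberField.InfinitePlace.not_isComplex_iff_isReal.mpr (htotallyReal v)) hv⟩
      rw [NumberField.InfinitePlace.card_eq_nrRealPlaces_add_nrComplexPlaces, h2]
      omega
    -- the product inequality
    have hprodα : ∏ v : InfinitePlace F, v α = |(Algebra.norm ℚ α : ℝ)| := hprod α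
    have hprodx : ∏ v : InfinitePlace F, (w v β) ^ 2 = |(Algebra.norm ℚ x : ℝ)| := by
      rw [← hprod x]
      exact Finset.prod_congr rfl fun v _ => (hvx v).symm
    have hprodαpos : 0 < ∏ v : InfinitePlace F, v α :=
      Finset.prod_pos fun v _ => hvαpos v
    have hNpos : (0:ℝ) < N := by exact_mod_cast Nat.pos_of_ne_zero hN
    -- ∏ f v ^ 2 ≥ 1/N
    have hfprod : (N:ℝ)⁻¹ ≤ ∏ v : InfinitePlace F, (f v) ^ 2 := by
      have : ∏ v : InfinitePlace F, (f v) ^ 2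
          = (∏ v : InfinitePlace F, (w v β) ^ 2) / (∏ v : InfinitePlace F, v α) := by
        rw [← Finset.prod_div_distrib]
        refine Finset.prod_congr rfl fun v _ => ?_
        rw [hf]
        rw [div_pow, Real.sq_sqrt (le_of_lt (hvαpos v))]
      rw [this, hprodx, le_div_iff₀ hprodαpos]
      calc (N:ℝ)⁻¹ * ∏ v : InfinitePlace F, v α
          ≤ (N:ℝ)⁻¹ * ((N:ℝ) * |(Algebra.norm ℚ x : ℝ)|) := by
            rw [hprodα]
            exact mul_le_mul_of_nonneg_left hkey (by positivity)
        _ = |(Algebra.norm ℚ x : ℝ)| := by field_simp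
    -- sup bound
    have hfle : ∀ v, f v ≤ ⨆ v, f v := fun v => le_ciSup hbdd v
    have hsuppow : (N:ℝ)⁻¹ ≤ (⨆ v, f v) ^ (2 * d) := by
      calc (N:ℝ)⁻¹ ≤ ∏ v : InfinitePlace F, (f v) ^ 2 := hfprod
        _ ≤ ∏ v : InfinitePlace F, (⨆ v, f v) ^ 2 :=
            Finset.prod_le_prod (fun v _ => sq_nonneg _)
              (fun v _ => pow_le_pow_left₀ (hfnonneg v) (hfle v) 2)
        _ = (⨆ v, f v) ^ (2 * d) := by
            rw [Finset.prod_const, Finset.card_univ, hcardF, ← pow_mul]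
    -- conclude via rpow
    have h2d : ((2 * d : ℕ) : ℝ) = 2 * (d:ℝ) := by push_cast; ring
    have hfinal : (N:ℝ) ^ (-(1 / (2 * (d:ℝ)))) ≤ ⨆ v, f v := by
      have hrw : (N:ℝ) ^ (-(1 / (2 * (d:ℝ)))) = ((N:ℝ)⁻¹) ^ ((1 / (2 * (d:ℝ)))) := by
        rw [Real.rpow_neg (le_of_lt hNpos), ← Real.inv_rpow (le_of_lt hNpos)]
      rw [hrw]
      have hstep : ((N:ℝ)⁻¹) ^ ((1 / (2 * (d:ℝ))))
          ≤ ((⨆ v, f v) ^ (2 * d) : ℝ) ^ ((1 / (2 * (d:ℝ)))) :=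
        Real.rpow_le_rpow (by positivity) hsuppow (by positivity)
      refine le_trans hstep (le_of_eq ?_)
      rw [← Real.rpow_natCast (⨆ v, f v) (2 * d), ← Real.rpow_mul hsup_nonneg, h2d]
      rw [mul_one_div, div_self (by positivity), Real.rpow_one]
    exact hfinal
  · -- part (ii)
    intro β hβ hβc
    have key : ∀ v : InfinitePlace F, w v β / Real.sqrt (v α) = 1 := by
      intro v
      have h1 : w v β * w v (c β) = v α := by
        rw [← map_mul, hβc, hwalg]
      rw [hwc v β] at h1
      have h2 : w v β = Real.sqrt (v α) := by
        rw [← h1]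
        exact (Real.sqrt_mul_self (AbsoluteValue.nonneg _ _)).symm
      rw [h2, div_self (ne_of_gt (hsqrtpos v))]
    refine ⟨?_, key⟩
    simp only [key]
    exact ciSup_const
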